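/- Every pure Nash equilibrium (x1*, x2*) of the two-player miner's dilemma game with betrayal assumption satisfies exactly one of the following: (a) x1* = 0; (b) x2* = 0; (c) (x1*, x2*) ∈ (0, m1)×(0, m2) and ∂r1/∂x1(x1*, x2*) = 0 and ∂r2/∂x2(x1*, x2*) = 0. -/

import Mathlib

/-- Average reward of pool 1 in the two-player miner's dilemma with betrayal,
where the total mining power is `m1 + m2 + t`. -/
noncomputable def r1 (m1 m2 t p x1 x2 : ℝ) : ℝ :=
  (m1*m2 + m1*x1 + p*m2*x2 - (1-p)*x1^2 - (1-p)*x1*x2) /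
    (((m1+m2+t) - (1-p)*(x1+x2)) * (m1*m2 + m1*x1 + m2*x2))

/-- Average reward of pool 2. -/
noncomputable def r2 (m1 m2 t p x1 x2 : ℝ) : ℝ :=
  (m1*m2 + m2*x2 + p*m1*x1 - (1-p)*x2^2 - (1-p)*x1*x2) /
    (((m1+m2+t) - (1-p)*(x1+x2)) * (m1*m2 + m1*x1 + m2*x2))

/-- `(x1, x2)` is a pure Nash equilibrium of the two-player miner's dilemma game. -/
noncomputable def IsNash (m1 m2 t p x1 x2 : ℝ) : Prop :=
  x1 ∈ Set.Icc 0 m1 ∧ x2 ∈ Set.Icc 0 m2 ∧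
  (∀ x ∈ Set.Icc (0:ℝ) m1, r1 m1 m2 t p x x2 ≤ r1 m1 m2 t p x1 x2) ∧
  (∀ x ∈ Set.Icc (0:ℝ) m2, r2 m1 m2 t p x1 x ≤ r2 m1 m2 t p x1 x2)

private lemma quadDeriv (c0 c1 c2 x : ℝ) :
    HasDerivAt (fun y : ℝ => c0 + c1*y + c2*y^2) (c1 + c2*(2*x)) x := by
  have h1 : HasDerivAt (fun y : ℝ => c0 + c1*y) (c1*1) x :=
    ((hasDerivAt_id x).const_mul c1).const_add c0
  have h2 := (hasDerivAt_pow 2 x).const_mul c2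
  have := h1.add h2
  convert this using 1
  · rfl
  · rfl
  · rfl
  · push_cast
    ring

private lemma ratDeriv (a0 a1 a2 b0 b1 b2 x : ℝ) (hb : b0 + b1*x + b2*x^2 ≠ 0) :
    HasDerivAt (fun y : ℝ => (a0+a1*y+a2*y^2)/(b0+b1*y+b2*y^2))
      (((a1+a2*(2*x))*(b0+b1*x+b2*x^2) - (a0+a1*x+a2*x^2)*(b1+b2*(2*x)))/(b0+b1*x+b2*x^2)^2) x :=
  (quadDeriv a0 a1 a2 x).div (quadDeriv b0 b1 b2 x) hb

private lemma deviate_left {f : ℝ → ℝ} {x d : ℝ} (hx : 0 < x) (hd : d < 0)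
    (hf : HasDerivAt f d x) : ∃ y ∈ Set.Ioo (0:ℝ) x, f x < f y := by
  have h := hasDerivAt_iff_tendsto_slope.mp hf
  have h2 : Filter.Tendsto (slope f x) (nhdsWithin x (Set.Iio x)) (nhds d) :=
    h.mono_left (nhdsWithin_mono x fun y hy => ne_of_lt hy)
  have h3 : ∀ᶠ y in nhdsWithin x (Set.Iio x), slope f x y < 0 :=
    h2.eventually (eventually_lt_nhds hd)
  have h4 : ∀ᶠ y in nhdsWithin x (Set.Iio x), y ∈ Set.Ioo (0:ℝ) x :=
    Filter.eventually_mem_set.mpr (Ioo_mem_nhdsLT_of_mem ⟨hx, le_refl x⟩)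
  obtain ⟨y, hy1, hy2⟩ := (h3.and h4).exists
  refine ⟨y, hy2, ?_⟩
  rw [slope_def_field] at hy1
  rcases div_neg_iff.mp hy1 with ⟨h5, _⟩ | ⟨_, h6⟩
  · linarith
  · exfalso; linarith [hy2.2]

private lemma deviate_right {f : ℝ → ℝ} {x b d : ℝ} (hx : x < b) (hd : 0 < d)
    (hf : HasDerivAt f d x) : ∃ y ∈ Set.Ioo x b, f x < f y := by
  have h := hasDerivAt_iff_tendsto_slope.mp hf
  have h2 : Filter.Tendsto (slope f x) (nhdsWithin x (Set.Ioi x)) (nhds d) :=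
    h.mono_left (nhdsWithin_mono x fun y hy => ne_of_gt hy)
  have h3 : ∀ᶠ y in nhdsWithin x (Set.Ioi x), 0 < slope f x y :=
    h2.eventually (eventually_gt_nhds hd)
  have h4 : ∀ᶠ y in nhdsWithin x (Set.Ioi x), y ∈ Set.Ioo x b :=
    Filter.eventually_mem_set.mpr (Ioo_mem_nhdsGT_of_mem ⟨le_refl x, hx⟩)
  obtain ⟨y, hy1, hy2⟩ := (h3.and h4).exists
  refine ⟨y, hy2, ?_⟩
  rw [slope_def_field] at hy1
  rcases div_pos_iff.mp hy1 with ⟨h5, h6⟩ | ⟨h5, h6⟩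
  · linarith
  · exfalso; linarith [hy2.1]

private lemma r2_eq (m1 m2 t p x1 x2 : ℝ) : r2 m1 m2 t p x1 x2 = r1 m2 m1 t p x2 x1 := by
  unfold r1 r2
  ring_nf

private lemma r1_eq (m1 m2 t p a : ℝ) : (fun x => r1 m1 m2 t p x a) =
    fun y : ℝ => ((m1*m2 + p*m2*a) + (m1 - (1-p)*a)*y + (-(1-p))*y^2) /
      ((((m1+m2+t) - (1-p)*a)*(m1*m2 + m2*a)) +
        (((m1+m2+t) - (1-p)*a)*m1 - (1-p)*(m1*m2 + m2*a))*y + (-((1-p)*m1))*y^2) := by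
  funext y
  unfold r1
  ring_nf

private lemma r1_zero_pos (m1 m2 t p a : ℝ) (hm1 : 0 < m1) (hm2 : 0 < m2) (ht : 0 ≤ t)
    (hp0 : 0 ≤ p) (hp1 : p < 1) (ha : 0 ≤ a) (ham : a ≤ m2) :
    0 < r1 m1 m2 t p 0 a := by
  unfold r1
  apply div_pos
  · nlinarith [mul_pos hm1 hm2, mul_nonneg (mul_nonneg hp0 hm2.le) ha]
  · apply mul_pos
    · nlinarith
    · nlinarith [mul_pos hm1 hm2, mul_nonneg hm2.le ha]

private lemma boundary1 (m1 m2 t p a : ℝ) (hm1 : 0 < m1) (hm2 : 0 < m2) (ht : 0 ≤ t)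
    (hp0 : 0 ≤ p) (hp1 : p < 1) (ha : 0 < a) (ham : a ≤ m2)
    (h : ∀ x ∈ Set.Icc (0:ℝ) m1, r1 m1 m2 t p x a ≤ r1 m1 m2 t p m1 a) : False := by
  have hq : 0 < 1 - p := by linarith
  have hr0 : 0 < r1 m1 m2 t p 0 a := r1_zero_pos m1 m2 t p a hm1 hm2 ht hp0 hp1 ha.le ham
  have hE : 0 < (m1+m2+t) - (1-p)*(m1+a) := by
    rcases lt_or_eq_of_le (show (0:ℝ) ≤ (m1+m2+t) - (1-p)*(m1+a) by nlinarith) with h' | h'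
    · exact h'
    · exfalso
      have hz : r1 m1 m2 t p m1 a = 0 := by
        unfold r1
        rw [show ((m1+m2+t) - (1-p)*(m1+a) : ℝ) = 0 from h'.symm, zero_mul, div_zero]
      have h0 := h 0 ⟨le_refl 0, hm1.le⟩
      rw [hz] at h0
      linarith
  have hF : 0 < m1*m2 + m1*m1 + m2*a := by positivity
  have hD : (0:ℝ) < (((m1+m2+t) - (1-p)*a)*(m1*m2 + m2*a)) +
      (((m1+m2+t) - (1-p)*a)*m1 - (1-p)*(m1*m2 + m2*a))*m1 + (-((1-p)*m1))*m1^2 := by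
    have hid : (((m1+m2+t) - (1-p)*a)*(m1*m2 + m2*a)) +
        (((m1+m2+t) - (1-p)*a)*m1 - (1-p)*(m1*m2 + m2*a))*m1 + (-((1-p)*m1))*m1^2
        = ((m1+m2+t) - (1-p)*(m1+a)) * (m1*m2 + m1*m1 + m2*a) := by ring
    rw [hid]
    exact mul_pos hE hF
  have hder := ratDeriv (m1*m2 + p*m2*a) (m1 - (1-p)*a) (-(1-p))
      (((m1+m2+t) - (1-p)*a)*(m1*m2 + m2*a))
      (((m1+m2+t) - (1-p)*a)*m1 - (1-p)*(m1*m2 + m2*a)) (-((1-p)*m1)) m1 hD.ne'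
  rw [← r1_eq m1 m2 t p a] at hder
  set num := ((m1 - (1-p)*a) + (-(1-p))*(2*m1)) *
      ((((m1+m2+t) - (1-p)*a)*(m1*m2 + m2*a)) +
        (((m1+m2+t) - (1-p)*a)*m1 - (1-p)*(m1*m2 + m2*a))*m1 + (-((1-p)*m1))*m1^2)
      - ((m1*m2 + p*m2*a) + (m1 - (1-p)*a)*m1 + (-(1-p))*m1^2) *
      ((((m1+m2+t) - (1-p)*a)*m1 - (1-p)*(m1*m2 + m2*a)) + (-((1-p)*m1))*(2*m1)) with hnumdef
  have hid2 : num = -((1-p) * (t*(m2*a^2 + 2*m1*m2*a + 2*m1^2*m2 + m1^3)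
      + m2*(1-p)*a^2*(m2-a)
      + m1*m2*(p*(a^2 + m1^2 + m1*m2) + (1-p)*(a+m1)*(m2-a)))) := by
    rw [hnumdef]; ring
  have hT : 0 < t*(m2*a^2 + 2*m1*m2*a + 2*m1^2*m2 + m1^3)
      + m2*(1-p)*a^2*(m2-a)
      + m1*m2*(p*(a^2 + m1^2 + m1*m2) + (1-p)*(a+m1)*(m2-a)) := by
    have n1 : 0 ≤ t*(m2*a^2 + 2*m1*m2*a + 2*m1^2*m2 + m1^3) :=
      mul_nonneg ht (by positivity)
    have n2 : 0 ≤ m2*(1-p)*a^2*(m2-a) :=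
      mul_nonneg (mul_nonneg (mul_nonneg hm2.le hq.le) (sq_nonneg a)) (by linarith)
    have n3 : 0 ≤ m1*m2*(p*(a^2 + m1^2 + m1*m2)) :=
      mul_nonneg (mul_nonneg hm1.le hm2.le) (mul_nonneg hp0 (by positivity))
    have n4 : 0 ≤ m1*m2*((1-p)*(a+m1)*(m2-a)) :=
      mul_nonneg (mul_nonneg hm1.le hm2.le)
        (mul_nonneg (mul_nonneg hq.le (by linarith)) (by linarith))
    have h5 : 0 < t ∨ 0 < p ∨ a < m2 := by
      by_contra hc
      push_neg at hc
      obtain ⟨h5a, h5b, h5c⟩ := hc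
      have ht0 : t = 0 := le_antisymm h5a ht
      have hp0' : p = 0 := le_antisymm h5b hp0
      have ha0 : a = m2 := le_antisymm ham h5c
      rw [ht0, hp0', ha0] at hE
      linarith
    rcases h5 with h5 | h5 | h5
    · have : 0 < t*(m2*a^2 + 2*m1*m2*a + 2*m1^2*m2 + m1^3) := mul_pos h5 (by positivity)
      nlinarith
    · have : 0 < m1*m2*(p*(a^2 + m1^2 + m1*m2)) :=
        mul_pos (mul_pos hm1 hm2) (mul_pos h5 (by positivity))
      nlinarith
    · have : 0 < m1*m2*((1-p)*(a+m1)*(m2-a)) :=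
        mul_pos (mul_pos hm1 hm2)
          (mul_pos (mul_pos hq (by linarith)) (by linarith))
      nlinarith
  have hneg : num / ((((m1+m2+t) - (1-p)*a)*(m1*m2 + m2*a)) +
      (((m1+m2+t) - (1-p)*a)*m1 - (1-p)*(m1*m2 + m2*a))*m1 + (-((1-p)*m1))*m1^2)^2 < 0 := by
    apply div_neg_of_neg_of_pos
    · rw [hid2]
      have := mul_pos hq hT
      linarith
    · exact pow_pos hD 2
  obtain ⟨y, hy, hlt⟩ := deviate_left hm1 hneg hder
  exact absurd (h y ⟨hy.1.le, hy.2.le⟩) (not_le.mpr hlt)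

private lemma zerozero (m1 m2 t p : ℝ) (hm1 : 0 < m1) (hm2 : 0 < m2) (ht : 0 ≤ t)
    (hp0 : 0 ≤ p) (hp1 : p < 1)
    (h : ∀ x ∈ Set.Icc (0:ℝ) m1, r1 m1 m2 t p x 0 ≤ r1 m1 m2 t p 0 0) : False := by
  have hq : 0 < 1 - p := by linarith
  have hD : (0:ℝ) < (((m1+m2+t) - (1-p)*0)*(m1*m2 + m2*0)) +
      (((m1+m2+t) - (1-p)*0)*m1 - (1-p)*(m1*m2 + m2*0))*0 + (-((1-p)*m1))*0^2 := by
    have hid : (((m1+m2+t) - (1-p)*0)*(m1*m2 + m2*0)) +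
        (((m1+m2+t) - (1-p)*0)*m1 - (1-p)*(m1*m2 + m2*0))*0 + (-((1-p)*m1))*0^2
        = (m1+m2+t)*(m1*m2) := by ring
    rw [hid]
    exact mul_pos (by linarith) (mul_pos hm1 hm2)
  have hder := ratDeriv (m1*m2 + p*m2*0) (m1 - (1-p)*0) (-(1-p))
      (((m1+m2+t) - (1-p)*0)*(m1*m2 + m2*0))
      (((m1+m2+t) - (1-p)*0)*m1 - (1-p)*(m1*m2 + m2*0)) (-((1-p)*m1)) 0 hD.ne'
  rw [← r1_eq m1 m2 t p 0] at hder
  set num := ((m1 - (1-p)*0) + (-(1-p))*(2*0)) *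
      ((((m1+m2+t) - (1-p)*0)*(m1*m2 + m2*0)) +
        (((m1+m2+t) - (1-p)*0)*m1 - (1-p)*(m1*m2 + m2*0))*0 + (-((1-p)*m1))*0^2)
      - ((m1*m2 + p*m2*0) + (m1 - (1-p)*0)*0 + (-(1-p))*0^2) *
      ((((m1+m2+t) - (1-p)*0)*m1 - (1-p)*(m1*m2 + m2*0)) + (-((1-p)*m1))*(2*0)) with hnumdef
  have hid2 : num = (1-p)*(m1*m2)^2 := by rw [hnumdef]; ring
  have hpos : 0 < num / ((((m1+m2+t) - (1-p)*0)*(m1*m2 + m2*0)) +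
      (((m1+m2+t) - (1-p)*0)*m1 - (1-p)*(m1*m2 + m2*0))*0 + (-((1-p)*m1))*0^2)^2 := by
    apply div_pos
    · rw [hid2]
      exact mul_pos hq (pow_pos (mul_pos hm1 hm2) 2)
    · exact pow_pos hD 2
  obtain ⟨y, hy, hlt⟩ := deviate_right hm1 hpos hder
  exact absurd (h y ⟨hy.1.le, hy.2.le⟩) (not_le.mpr hlt)

/-- Every pure Nash equilibrium satisfies exactly one of: (a) `x1* = 0`;
(b) `x2* = 0`; (c) interior with vanishing partial derivatives. -/
theorem stmt8 (m1 m2 t p : ℝ) (hm1 : 0 < m1) (hm2 : 0 < m2) (ht : 0 ≤ t)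
    (hp0 : 0 ≤ p) (hp1 : p < 1) (x1s x2s : ℝ)
    (hne : IsNash m1 m2 t p x1s x2s) :
    (x1s = 0 ∧ ¬(x2s = 0)) ∨
    (¬(x1s = 0) ∧ x2s = 0) ∨
    (¬(x1s = 0) ∧ ¬(x2s = 0) ∧
      x1s ∈ Set.Ioo 0 m1 ∧ x2s ∈ Set.Ioo 0 m2 ∧
      deriv (fun x => r1 m1 m2 t p x x2s) x1s = 0 ∧
      deriv (fun x => r2 m1 m2 t p x1s x) x2s = 0) := by
  obtain ⟨hx1, hx2, hbr1, hbr2⟩ := hne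
  by_cases h1 : x1s = 0 <;> by_cases h2 : x2s = 0
  · exfalso
    subst h1; subst h2
    exact zerozero m1 m2 t p hm1 hm2 ht hp0 hp1 hbr1
  · exact Or.inl ⟨h1, h2⟩
  · exact Or.inr (Or.inl ⟨h1, h2⟩)
  · have hx1p : 0 < x1s := lt_of_le_of_ne hx1.1 (Ne.symm h1)
    have hx2p : 0 < x2s := lt_of_le_of_ne hx2.1 (Ne.symm h2)
    have hx1m : x1s < m1 := by
      rcases lt_or_eq_of_le hx1.2 with h' | h'
      · exact h'
      · exfalso
        subst h'
        exact boundary1 x1s m2 t p x2s hm1 hm2 ht hp0 hp1 hx2p hx2.2 hbr1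
    have hx2m : x2s < m2 := by
      rcases lt_or_eq_of_le hx2.2 with h' | h'
      · exact h'
      · exfalso
        subst h'
        have hbr2' : ∀ x ∈ Set.Icc (0:ℝ) x2s, r1 x2s m1 t p x x1s ≤ r1 x2s m1 t p x2s x1s := by
          intro x hx
          rw [← r2_eq, ← r2_eq]
          exact hbr2 x hx
        exact boundary1 x2s m1 t p x1s hm2 hm1 ht hp0 hp1 hx1p hx1.2 hbr2'
    have hloc1 : IsLocalMax (fun x => r1 m1 m2 t p x x2s) x1s :=
      Filter.eventually_of_mem (Icc_mem_nhds hx1p hx1m) (fun y hy => hbr1 y hy)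
    have hloc2 : IsLocalMax (fun x => r2 m1 m2 t p x1s x) x2s :=
      Filter.eventually_of_mem (Icc_mem_nhds hx2p hx2m) (fun y hy => hbr2 y hy)
    exact Or.inr (Or.inr ⟨h1, h2, ⟨hx1p, hx1m⟩, ⟨hx2p, hx2m⟩,
      hloc1.deriv_eq_zero, hloc2.deriv_eq_zero⟩)
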